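/- Let d ≥ 1. Define the 2d×2d matrices (1-based indices): M by M_{jk} = binom(2d−j, k−1) if j + k ≤ 2d+1 and 0 otherwise; S by S_{1,d} = 1 and all other entries 0; and R by R_{2d,k} = binom(d, k−1) for 1 ≤ k ≤ d+1 and all other entries 0. Then S·M = M·R; in particular M⁻¹·S·M = R, a matrix whose only nonzero row is the last row, with entries binom(d, k−1) in columns k = 1,…,d+1. -/

import Mathlib

open Matrix

/-- Conjugating the rank-one matrix `S` (with `S_{1,d} = 1`) by the Pascal
matrix `M` yields the matrix `R` whose only nonzero row is the last one, with
binomial entries: `S·M = M·R`, hence `M⁻¹·S·M = R`. -/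
theorem stmt_15 {d : ℕ} (hd : 1 ≤ d)
    (M S R : Matrix (Fin (2 * d)) (Fin (2 * d)) ℤ)
    (hM : M = Matrix.of fun j k : Fin (2 * d) =>
      if (j : ℕ) + 1 + ((k : ℕ) + 1) ≤ 2 * d + 1 then
        (Nat.choose (2 * d - ((j : ℕ) + 1)) (k : ℕ) : ℤ)
      else 0)
    (hS : S = Matrix.of fun j k : Fin (2 * d) =>
      if (j : ℕ) + 1 = 1 ∧ (k : ℕ) + 1 = d then (1 : ℤ) else 0)
    (hR : R = Matrix.of fun j k : Fin (2 * d) =>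
      if (j : ℕ) + 1 = 2 * d ∧ (k : ℕ) + 1 ≤ d + 1 then
        (Nat.choose d (k : ℕ) : ℤ)
      else 0) :
    S * M = M * R ∧ M⁻¹ * S * M = R := by
  have h2d : 0 < 2 * d := by omega
  have h1 : S * M = M * R := by
    ext j k
    rw [hM, hS, hR]
    simp only [Matrix.mul_apply, Matrix.of_apply]
    rw [Finset.sum_eq_single (⟨d - 1, by omega⟩ : Fin (2 * d)) (fun i _ hi => by
        have hne : ¬((j : ℕ) + 1 = 1 ∧ (i : ℕ) + 1 = d) := by
          rintro ⟨-, h⟩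
          exact hi (Fin.ext (by simp; omega))
        rw [if_neg hne, zero_mul]) (by simp),
      Finset.sum_eq_single (⟨2 * d - 1, by omega⟩ : Fin (2 * d)) (fun i _ hi => by
        have hne : ¬((i : ℕ) + 1 = 2 * d ∧ (k : ℕ) + 1 ≤ d + 1) := by
          rintro ⟨h, -⟩
          exact hi (Fin.ext (by simp; omega))
        rw [if_neg hne, mul_zero]) (by simp)]
    simp only [Fin.val_mk]
    rw [show d - 1 + 1 = d from by omega, show 2 * d - 1 + 1 = 2 * d from by omega,
      show 2 * d - d = d from by omega]
    by_cases hj : (j : ℕ) = 0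
    · by_cases hk : (k : ℕ) + 1 ≤ d + 1
      · rw [if_pos ⟨by omega, rfl⟩, one_mul, if_pos (by omega),
          if_pos (by omega), if_pos ⟨rfl, hk⟩]
        have e2 : 2 * d - ((j : ℕ) + 1) = 2 * d - 1 := by omega
        rw [e2, Nat.choose_self]
        simp
      · rw [if_pos ⟨by omega, rfl⟩, one_mul, if_neg (by omega),
          if_pos (by omega), if_neg (fun h => hk h.2), mul_zero]
    · rw [if_neg (fun h => hj (by omega : (j : ℕ) = 0)), zero_mul,
        if_neg (show ¬((j : ℕ) + 1 + 2 * d ≤ 2 * d + 1) from by omega), zero_mul]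
  refine ⟨h1, ?_⟩
  have hu : IsUnit M.det := by
    have hdet : (M.submatrix id (Fin.revPerm : Equiv.Perm (Fin (2 * d)))).det = 1 := by
      have htri : (M.submatrix id (Fin.revPerm : Equiv.Perm (Fin (2 * d)))).BlockTriangular id := by
        intro i j hij
        have hji : (j : ℕ) < (i : ℕ) := hij
        have hjl := j.isLt
        simp only [Matrix.submatrix_apply, id_eq, hM, Matrix.of_apply, Fin.revPerm_apply,
          Fin.val_rev]
        rw [if_neg (by omega)]
      rw [Matrix.det_of_upperTriangular htri]
      apply Finset.prod_eq_one
      intro i _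
      have hil := i.isLt
      simp only [Matrix.submatrix_apply, id_eq, hM, Matrix.of_apply, Fin.revPerm_apply,
        Fin.val_rev]
      rw [if_pos (by omega)]
      have e : 2 * d - ((i : ℕ) + 1) = 2 * d - ((i : ℕ) + 1) := rfl
      rw [Nat.choose_self]
      simp
    rw [Matrix.det_permute'] at hdet
    exact IsUnit.of_mul_eq_one _ (by rw [mul_comm]; exact hdet)
  rw [mul_assoc, h1, ← mul_assoc, Matrix.nonsing_inv_mul M hu, one_mul]
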